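/- Let d ≥ 1, 1 ≤ N ≤ d, A : (N-subsets of Fin d) → ℂ with ∑_S |A(S)|² = 1, and c : Fin d → ℂ with ∑_k |c(k)|² = 1. With A(T ∪ {k}) := 0 when k ∈ T, one has ∑_{T : (N−1)-subsets} |∑_k conj(A(T ∪ {k})) c(k)|² ≤ 1 + (N−1) · ∑_{S : N-subsets} |A(S)|² · ∑_{k ∉ S} |c(k)|². -/

import Mathlib

open Finset

lemma reindex_aux {d N : ℕ} (hN1 : 1 ≤ N) (F : Finset (Fin d) → Finset (Fin d) → ℝ) :
    ∑ T ∈ powersetCard (N-1) (univ : Finset (Fin d)), ∑ k ∈ univ \ T, F (insert k T) T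
    = ∑ S ∈ powersetCard N (univ : Finset (Fin d)), ∑ k ∈ S, F S (S.erase k) := by
  rw [Finset.sum_sigma', Finset.sum_sigma']
  refine Finset.sum_nbij' (fun p => ⟨insert p.2 p.1, p.2⟩) (fun p => ⟨p.1.erase p.2, p.2⟩)
    ?_ ?_ ?_ ?_ ?_
  · rintro ⟨T, k⟩ hp
    simp only [mem_sigma, mem_powersetCard, mem_sdiff, mem_univ, true_and] at hp ⊢
    obtain ⟨⟨-, hT⟩, hk⟩ := hp
    refine ⟨⟨subset_univ _, ?_⟩, mem_insert_self _ _⟩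
    rw [card_insert_of_notMem hk, hT]
    omega
  · rintro ⟨S, k⟩ hp
    simp only [mem_sigma, mem_powersetCard, mem_sdiff, mem_univ, true_and] at hp ⊢
    obtain ⟨⟨-, hS⟩, hk⟩ := hp
    exact ⟨⟨subset_univ _, by rw [card_erase_of_mem hk, hS]⟩, notMem_erase _ _⟩
  · rintro ⟨T, k⟩ hp
    simp only [mem_sigma, mem_powersetCard, mem_sdiff, mem_univ, true_and] at hp
    simp [erase_insert hp.2]
  · rintro ⟨S, k⟩ hp
    simp only [mem_sigma, mem_powersetCard, mem_sdiff, mem_univ, true_and] at hp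
    simp [insert_erase hp.2]
  · rintro ⟨T, k⟩ hp
    simp only [mem_sigma, mem_powersetCard, mem_sdiff, mem_univ, true_and] at hp
    simp [erase_insert hp.2]

theorem stmt1 (d N : ℕ) (hd : 1 ≤ d) (hN1 : 1 ≤ N) (hNd : N ≤ d)
    (A : Finset (Fin d) → ℂ)
    (hA : ∑ S ∈ Finset.powersetCard N (Finset.univ : Finset (Fin d)),
        ‖A S‖ ^ 2 = 1)
    (c : Fin d → ℂ) (hc : ∑ k, ‖c k‖ ^ 2 = 1) :
    ∑ T ∈ Finset.powersetCard (N - 1) (Finset.univ : Finset (Fin d)),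
      ‖∑ k, (starRingEnd ℂ) (if k ∈ T then 0 else A (insert k T)) * c k‖ ^ 2
      ≤ 1 + ((N : ℝ) - 1) *
        ∑ S ∈ Finset.powersetCard N (Finset.univ : Finset (Fin d)),
          ‖A S‖ ^ 2 * ∑ k ∈ (Finset.univ : Finset (Fin d)) \ S,
            ‖c k‖ ^ 2 := by
  have hrestrict : ∀ (T : Finset (Fin d)) (g : Fin d → ℝ), (∀ k ∈ T, g k = 0) →
      ∑ k, g k = ∑ k ∈ univ \ T, g k := by
    intro T g hg
    rw [← Finset.sum_sdiff (subset_univ T), Finset.sum_eq_zero hg, add_zero]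
  have key : ∀ T ∈ powersetCard (N-1) (univ : Finset (Fin d)),
      ‖∑ k, (starRingEnd ℂ) (if k ∈ T then 0 else A (insert k T)) * c k‖ ^ 2
      ≤ ∑ k ∈ univ \ T, ‖A (insert k T)‖ ^ 2 * ∑ l ∈ univ \ T, ‖c l‖ ^ 2 := by
    intro T hT
    rw [← Finset.sum_mul]
    calc ‖∑ k, (starRingEnd ℂ) (if k ∈ T then 0 else A (insert k T)) * c k‖ ^ 2
        ≤ (∑ k, ‖if k ∈ T then 0 else A (insert k T)‖ * ‖c k‖) ^ 2 := by
          apply pow_le_pow_left₀ (norm_nonneg _)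
          exact (norm_sum_le _ _).trans (le_of_eq (Finset.sum_congr rfl fun k _ => by
            simp [norm_mul]))
      _ = (∑ k, ‖if k ∈ T then 0 else A (insert k T)‖ *
            (if k ∈ T then 0 else ‖c k‖)) ^ 2 := by
          congr 1
          apply Finset.sum_congr rfl
          intro k _
          by_cases hk : k ∈ T <;> simp [hk]
      _ ≤ (∑ k, ‖if k ∈ T then 0 else A (insert k T)‖ ^ 2) *
            (∑ k, (if k ∈ T then 0 else ‖c k‖) ^ 2) :=
          Finset.sum_mul_sq_le_sq_mul_sq Finset.univ _ _
      _ = (∑ k ∈ univ \ T, ‖A (insert k T)‖ ^ 2) *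
            (∑ l ∈ univ \ T, ‖c l‖ ^ 2) := by
          congr 1
          · rw [hrestrict T _ (fun k hk => by simp [hk])]
            apply Finset.sum_congr rfl
            intro k hk
            rw [mem_sdiff] at hk
            rw [if_neg hk.2]
          · rw [hrestrict T _ (fun k hk => by simp [hk])]
            apply Finset.sum_congr rfl
            intro k hk
            rw [mem_sdiff] at hk
            rw [if_neg hk.2]
  calc _ ≤ ∑ T ∈ powersetCard (N-1) (univ : Finset (Fin d)),
        ∑ k ∈ univ \ T, ‖A (insert k T)‖ ^ 2 * ∑ l ∈ univ \ T, ‖c l‖ ^ 2 :=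
      Finset.sum_le_sum key
    _ = ∑ S ∈ powersetCard N (univ : Finset (Fin d)), ∑ k ∈ S,
        ‖A S‖ ^ 2 * ∑ l ∈ univ \ (S.erase k), ‖c l‖ ^ 2 :=
      reindex_aux hN1 (fun S T => ‖A S‖ ^ 2 * ∑ l ∈ univ \ T, ‖c l‖ ^ 2)
    _ = ∑ S ∈ powersetCard N (univ : Finset (Fin d)),
        ‖A S‖ ^ 2 * (1 + ((N:ℝ) - 1) * ∑ l ∈ univ \ S, ‖c l‖ ^ 2) := by
      apply Finset.sum_congr rfl
      intro S hS
      rw [mem_powersetCard] at hS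
      have hsplit : ∀ k ∈ S, ∑ l ∈ univ \ (S.erase k), ‖c l‖ ^ 2
          = ‖c k‖ ^ 2 + ∑ l ∈ univ \ S, ‖c l‖ ^ 2 := by
        intro k hk
        have heq : (univ : Finset (Fin d)) \ (S.erase k) = insert k (univ \ S) := by
          ext x
          simp only [mem_sdiff, mem_univ, true_and, mem_erase, mem_insert, not_and]
          by_cases hx : x = k <;> simp [hx]
        rw [heq, Finset.sum_insert (by simp [hk])]
      rw [Finset.sum_congr rfl (fun k hk => by rw [hsplit k hk]), ← Finset.mul_sum,
        Finset.sum_add_distrib, Finset.sum_const, hS.2]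
      have hcs : ∑ k ∈ S, ‖c k‖ ^ 2
          = 1 - ∑ l ∈ univ \ S, ‖c l‖ ^ 2 := by
        have h := Finset.sum_sdiff (f := fun k => ‖c k‖ ^ 2) (subset_univ S)
        rw [hc] at h; linarith
      rw [hcs]
      congr 1
      push_cast
      ring
    _ = 1 + ((N:ℝ) - 1) * ∑ S ∈ powersetCard N (univ : Finset (Fin d)),
        ‖A S‖ ^ 2 * ∑ l ∈ univ \ S, ‖c l‖ ^ 2 := by
      rw [Finset.sum_congr rfl (fun S _ => mul_add _ _ _), Finset.sum_add_distrib]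
      simp only [mul_one, hA]
      congr 1
      rw [Finset.mul_sum]
      apply Finset.sum_congr rfl
      intro S _
      ring
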